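/- arXiv:2105.00597 — 3 statements merged into one kernel-verified Lean document; each statement's English description precedes it below -/
import Mathlib

section
/- Let $(X,\mu)$ be a finite measure space, $g:\mathbb{R}\to\mathbb{R}$ bounded, continuous, strictly increasing with $a<0<b$ as limits at $\mp\infty$, and for $w \in L^2(X)$ let $\mathcal{C}(w)$ denote the unique $c \in \mathbb{R}$ with $\int_X g(w + c)\,d\mu = 0$. If $w_n \to w_0$ in $L^2(X,\mu)$, then $\mathcal{C}(w_n) \to \mathcal{C}(w_0)$. -/
open MeasureTheory Filter
open scoped ENNReal NNReal

theorem stmt_7 {X : Type*} [MeasurableSpace X] (μ : Measure X) [IsFiniteMeasure μ]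
    (hμ : 0 < (μ Set.univ).toReal)
    (g : ℝ → ℝ) (a b : ℝ) (L : NNReal)
    (hg_cont : Continuous g) (hg_mono : StrictMono g)
    (hg_bdd : ∃ M : ℝ, ∀ t, |g t| ≤ M) (hg_lip : LipschitzWith L g)
    (ha : Tendsto g atBot (nhds a)) (hb : Tendsto g atTop (nhds b))
    (ha0 : a < 0) (h0b : 0 < b)
    (C : (X → ℝ) → ℝ)
    (hC : ∀ w : X → ℝ, Measurable w → ∫ x, g (w x + C w) ∂μ = 0)
    (w : ℕ → X → ℝ) (w0 : X → ℝ)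
    (hwn : ∀ n, Measurable (w n)) (hw0 : Measurable w0)
    (hL2 : Tendsto (fun n => eLpNorm (fun x => w n x - w0 x) 2 μ) atTop (nhds 0)) :
    Tendsto (fun n => C (w n)) atTop (nhds (C w0)) := by
  obtain ⟨M, hM⟩ := hg_bdd
  -- integrability of g ∘ (v + c)
  have key_int : ∀ (v : X → ℝ) (c : ℝ), Measurable v →
      Integrable (fun x => g (v x + c)) μ := by
    intro v c hv
    exact (memLp_top_of_bound
      ((hg_cont.measurable.comp (hv.add_const c)).aestronglyMeasurable) M
      (Eventually.of_forall fun x => by simpa using hM _)).integrable le_top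
  have hμ0 : μ Set.univ ≠ 0 := by
    intro h; rw [h] at hμ; simp at hμ
  set c0 := C w0 with hc0
  -- L¹ distance tends to 0
  have hI : Tendsto (fun n => ∫ x, |w n x - w0 x| ∂μ) atTop (nhds 0) := by
    have h1 : Tendsto (fun n => eLpNorm (fun x => w n x - w0 x) 1 μ) atTop (nhds 0) := by
      have hc : (μ Set.univ) ^ (1 / (1:ℝ≥0∞).toReal - 1 / (2:ℝ≥0∞).toReal) ≠ ∞ := by
        apply ENNReal.rpow_ne_top_of_nonneg _ (measure_ne_top μ _)
        norm_num
      have hmul : Tendsto (fun n => eLpNorm (fun x => w n x - w0 x) 2 μ *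
          (μ Set.univ) ^ (1 / (1:ℝ≥0∞).toReal - 1 / (2:ℝ≥0∞).toReal)) atTop (nhds 0) := by
        have := ENNReal.Tendsto.mul_const hL2 (Or.inr hc)
        simpa using this
      refine tendsto_of_tendsto_of_tendsto_of_le_of_le tendsto_const_nhds hmul
        (fun n => zero_le) (fun n => ?_)
      exact eLpNorm_le_eLpNorm_mul_rpow_measure_univ (by norm_num)
        ((hwn n).sub hw0).aestronglyMeasurable
    have h2 : Tendsto (fun n => (eLpNorm (fun x => w n x - w0 x) 1 μ).toReal)
        atTop (nhds 0) := by
      have := (ENNReal.tendsto_toReal (by simp : (0:ℝ≥0∞) ≠ ∞)).comp h1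
      simpa [Function.comp_def] using this
    refine tendsto_of_tendsto_of_tendsto_of_le_of_le tendsto_const_nhds h2
      (fun n => integral_nonneg fun x => abs_nonneg _) (fun n => ?_)
    have : ∫ x, |w n x - w0 x| ∂μ = ∫ x, ‖w n x - w0 x‖ ∂μ := by
      simp [Real.norm_eq_abs]
    rw [this, integral_norm_eq_lintegral_enorm (f := fun x => w n x - w0 x) ((hwn n).sub hw0).aestronglyMeasurable,
      eLpNorm_one_eq_lintegral_enorm]
  -- eventual integrability of w n - w0
  have hint : ∀ᶠ n in atTop, Integrable (fun x => w n x - w0 x) μ := by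
    filter_upwards [hL2.eventually_lt_const (by simp : (0:ℝ≥0∞) < ∞)] with n hn
    exact (MemLp.integrable one_le_two ⟨((hwn n).sub hw0).aestronglyMeasurable, hn⟩)
  rw [Metric.tendsto_atTop]
  intro ε hε
  -- strict positivity at c0 + ε, strict negativity at c0 - ε
  have hstrict : ∀ (ε' : ℝ), 0 < ε' →
      0 < ∫ x, g (w0 x + (c0 + ε')) ∂μ - ∫ x, g (w0 x + c0) ∂μ := by
    intro ε' hε'
    have hsub : Integrable (fun x => g (w0 x + (c0 + ε')) - g (w0 x + c0)) μ :=
      (key_int w0 _ hw0).sub (key_int w0 _ hw0)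
    have hpt : ∀ x, 0 < g (w0 x + (c0 + ε')) - g (w0 x + c0) := by
      intro x; have := hg_mono (show w0 x + c0 < w0 x + (c0 + ε') by linarith); linarith
    have : 0 < ∫ x, (g (w0 x + (c0 + ε')) - g (w0 x + c0)) ∂μ := by
      rw [integral_pos_iff_support_of_nonneg (fun x => (hpt x).le) hsub]
      have hs : Function.support (fun x => g (w0 x + (c0 + ε')) - g (w0 x + c0))
          = Set.univ := Set.eq_univ_of_forall fun x => ne_of_gt (hpt x)
      rw [hs]
      exact pos_iff_ne_zero.mpr hμ0
    rwa [integral_sub (key_int w0 _ hw0) (key_int w0 _ hw0)] at this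
  have h00 : ∫ x, g (w0 x + c0) ∂μ = 0 := hC w0 hw0
  have hpos : 0 < ∫ x, g (w0 x + (c0 + ε)) ∂μ := by
    have := hstrict ε hε; linarith
  have hneg : ∫ x, g (w0 x + (c0 - ε)) ∂μ < 0 := by
    have h := hstrict ε hε
    -- use strictness from c0 - ε to c0
    have hsub : Integrable (fun x => g (w0 x + c0) - g (w0 x + (c0 - ε))) μ :=
      (key_int w0 _ hw0).sub (key_int w0 _ hw0)
    have hpt : ∀ x, 0 < g (w0 x + c0) - g (w0 x + (c0 - ε)) := by
      intro x; have := hg_mono (show w0 x + (c0 - ε) < w0 x + c0 by linarith); linarith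
    have hlt : 0 < ∫ x, (g (w0 x + c0) - g (w0 x + (c0 - ε))) ∂μ := by
      rw [integral_pos_iff_support_of_nonneg (fun x => (hpt x).le) hsub]
      have hs : Function.support (fun x => g (w0 x + c0) - g (w0 x + (c0 - ε)))
          = Set.univ := Set.eq_univ_of_forall fun x => ne_of_gt (hpt x)
      rw [hs]
      exact pos_iff_ne_zero.mpr hμ0
    rw [integral_sub (key_int w0 _ hw0) (key_int w0 _ hw0), h00] at hlt
    linarith
  set δ := min (∫ x, g (w0 x + (c0 + ε)) ∂μ) (-∫ x, g (w0 x + (c0 - ε)) ∂μ) with hδ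
  have hδpos : 0 < δ := lt_min hpos (by linarith)
  -- eventual closeness in L¹
  have hLpos : (0:ℝ) < (L:ℝ) + 1 := by positivity
  have hev : ∀ᶠ n in atTop, ((L:ℝ) + 1) * ∫ x, |w n x - w0 x| ∂μ < δ := by
    have := (Metric.tendsto_atTop.mp hI (δ / ((L:ℝ) + 1)) (by positivity))
    obtain ⟨N, hN⟩ := this
    refine eventually_atTop.2 ⟨N, fun n hn => ?_⟩
    have := hN n hn
    rw [Real.dist_eq, sub_zero, abs_of_nonneg (integral_nonneg fun x => abs_nonneg _)] at this
    calc ((L:ℝ) + 1) * ∫ x, |w n x - w0 x| ∂μ < ((L:ℝ) + 1) * (δ / ((L:ℝ) + 1)) := by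
            exact mul_lt_mul_of_pos_left this hLpos
      _ = δ := by field_simp
  rw [← eventually_atTop]
  filter_upwards [hev, hint] with n hn hintn
  -- key Lipschitz comparison for any c
  have hcomp : ∀ c : ℝ, |(∫ x, g (w n x + c) ∂μ) - ∫ x, g (w0 x + c) ∂μ|
      ≤ ((L:ℝ) + 1) * ∫ x, |w n x - w0 x| ∂μ := by
    intro c
    rw [← integral_sub (key_int (w n) c (hwn n)) (key_int w0 c hw0)]
    have h1 : |∫ x, (g (w n x + c) - g (w0 x + c)) ∂μ|
        ≤ ∫ x, |g (w n x + c) - g (w0 x + c)| ∂μ := by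
      simpa [Real.norm_eq_abs] using
        norm_integral_le_integral_norm (fun x => g (w n x + c) - g (w0 x + c)) (μ := μ)
    refine h1.trans ?_
    have h2 : ∫ x, |g (w n x + c) - g (w0 x + c)| ∂μ
        ≤ ∫ x, ((L:ℝ) + 1) * |w n x - w0 x| ∂μ := by
      refine integral_mono ((key_int (w n) c (hwn n)).sub (key_int w0 c hw0)).abs
        (hintn.abs.const_mul _) (fun x => ?_)
      have := hg_lip.dist_le_mul (w n x + c) (w0 x + c)
      rw [Real.dist_eq, Real.dist_eq] at this
      have h3 : w n x + c - (w0 x + c) = w n x - w0 x := by ring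
      rw [h3] at this
      nlinarith [abs_nonneg (w n x - w0 x)]
    simpa [integral_const_mul] using h2
  -- derive two-sided bounds on C (w n)
  have hup : C (w n) < c0 + ε := by
    by_contra hcon
    push_neg at hcon
    have hmono : ∀ x, g (w n x + (c0 + ε)) ≤ g (w n x + C (w n)) := fun x =>
      hg_mono.monotone (by linarith)
    have hle : ∫ x, g (w n x + (c0 + ε)) ∂μ ≤ ∫ x, g (w n x + C (w n)) ∂μ :=
      integral_mono (key_int (w n) _ (hwn n)) (key_int (w n) _ (hwn n)) hmono
    rw [hC (w n) (hwn n)] at hle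
    have habs := (abs_le.mp (hcomp (c0 + ε))).1
    have hδle : δ ≤ ∫ x, g (w0 x + (c0 + ε)) ∂μ := min_le_left _ _
    linarith
  have hdown : c0 - ε < C (w n) := by
    by_contra hcon
    push_neg at hcon
    have hmono : ∀ x, g (w n x + C (w n)) ≤ g (w n x + (c0 - ε)) := fun x =>
      hg_mono.monotone (by linarith)
    have hle : ∫ x, g (w n x + C (w n)) ∂μ ≤ ∫ x, g (w n x + (c0 - ε)) ∂μ :=
      integral_mono (key_int (w n) _ (hwn n)) (key_int (w n) _ (hwn n)) hmono
    rw [hC (w n) (hwn n)] at hle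
    have habs := (abs_le.mp (hcomp (c0 - ε))).2
    have hδle : δ ≤ -∫ x, g (w0 x + (c0 - ε)) ∂μ := min_le_right _ _
    linarith
  rw [Real.dist_eq, abs_sub_lt_iff]
  constructor <;> linarith
end

section
/- A necessary condition for existence of a solution of the vortex equations on a compact surface $\Sigma$ with $k_+$ vortices and $k_-$ antivortices is the Bradlow-type bound $-\frac{(1+\tau)|\Sigma|}{2\pi} < k_+ - k_- < \frac{(1-\tau)|\Sigma|}{2\pi}$. Abstractly: if $f : \Sigma \to [-1,1]$ is a measurable function on a finite measure space of total measure $|\Sigma|$, $f$ is not a.e. equal to $+1$ nor a.e. equal to $-1$, $\tau \in (-1,1)$, and $2\pi(k_+ - k_-) = \int_\Sigma f \, d\mu - \tau |\Sigma|$, then $-\frac{(1+\tau)|\Sigma|}{2\pi} < k_+ - k_- < \frac{(1-\tau)|\Sigma|}{2\pi}$. -/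
open MeasureTheory

theorem stmt_11 {S : Type*} [MeasurableSpace S] (μ : Measure S) [IsFiniteMeasure μ]
    (hμpos : 0 < (μ Set.univ).toReal)
    (τ : ℝ) (hτ : τ ∈ Set.Ioo (-1 : ℝ) 1)
    (kp km : ℤ)
    (f : S → ℝ) (hfmeas : Measurable f)
    (hfbdd : ∀ x, f x ∈ Set.Icc (-1 : ℝ) 1)
    (hne1 : ¬ (f =ᵐ[μ] fun _ => (1 : ℝ)))
    (hne2 : ¬ (f =ᵐ[μ] fun _ => (-1 : ℝ)))
    (hflux : 2 * Real.pi * ((kp : ℝ) - km) = (∫ x, f x ∂μ) - τ * (μ Set.univ).toReal) :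
    -((1 + τ) * (μ Set.univ).toReal) / (2 * Real.pi) < (kp : ℝ) - km ∧
      (kp : ℝ) - km < (1 - τ) * (μ Set.univ).toReal / (2 * Real.pi) := by
  have hπ : 0 < 2 * Real.pi := by positivity
  have hfi : Integrable f μ :=
    ⟨hfmeas.aestronglyMeasurable, HasFiniteIntegral.of_bounded (C := 1)
      (ae_of_all μ fun x => abs_le.mpr ⟨(hfbdd x).1, (hfbdd x).2⟩)⟩
  have hM : ∫ (_ : S), (1 : ℝ) ∂μ = (μ Set.univ).toReal := by simp [Measure.real]
  -- upper strict bound: ∫ f < μ univ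
  have h1 : ∫ x, f x ∂μ < (μ Set.univ).toReal := by
    have hg : Integrable (fun x => 1 - f x) μ := (integrable_const 1).sub hfi
    have hpos : 0 < ∫ x, (1 - f x) ∂μ := by
      rcases lt_or_eq_of_le (integral_nonneg (f := fun x => 1 - f x) fun x => by simp only [Pi.zero_apply]; linarith [(hfbdd x).2]) with h | h
      · exact h
      · exfalso
        have := (integral_eq_zero_iff_of_nonneg (fun x => by
          simp only [Pi.zero_apply]; linarith [(hfbdd x).2]) hg).mp h.symm
        exact hne1 (this.mono fun x hx => by
          simp only [Pi.zero_apply] at hx; dsimp at hx ⊢; linarith)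
    have : ∫ x, (1 - f x) ∂μ = (μ Set.univ).toReal - ∫ x, f x ∂μ := by
      rw [integral_sub (integrable_const 1) hfi, hM]
    linarith
  -- lower strict bound
  have h2 : -(μ Set.univ).toReal < ∫ x, f x ∂μ := by
    have hg : Integrable (fun x => f x + 1) μ := hfi.add (integrable_const 1)
    have hpos : 0 < ∫ x, (f x + 1) ∂μ := by
      rcases lt_or_eq_of_le (integral_nonneg (f := fun x => f x + 1) fun x => by simp only [Pi.zero_apply]; linarith [(hfbdd x).1]) with h | h
      · exact h
      · exfalso
        have := (integral_eq_zero_iff_of_nonneg (fun x => by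
          simp only [Pi.zero_apply]; linarith [(hfbdd x).1]) hg).mp h.symm
        exact hne2 (this.mono fun x hx => by
          simp only [Pi.zero_apply] at hx; dsimp at hx ⊢; linarith)
    have : ∫ x, (f x + 1) ∂μ = (∫ x, f x ∂μ) + (μ Set.univ).toReal := by
      rw [integral_add hfi (integrable_const 1), hM]
    linarith
  constructor
  · rw [div_lt_iff₀ hπ] at *
    nlinarith
  · rw [lt_div_iff₀ hπ]
    nlinarith
end

section
/- Let $b_1, b_2 : \Omega \to \mathbb{C}$ be differentiable functions on an open connected set $\Omega \subset \mathbb{C}^2$ that are translation invariant, i.e. $b_j(z_1 + v, z_2 + v) = b_j(z_1,z_2)$ for all small $v \in \mathbb{C}$, and satisfy the symmetry relations $\partial_{z_j}(b_1 + b_2) = \overline{\partial}_{z_1}\overline{b_j} + \overline{\partial}_{z_2}\overline{b_j}$ and the analogous conjugate relations. Then $b_1 + b_2$ is constant on $\Omega$. -/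
open Complex

/-- Wirtinger derivative in the first variable of a function `ℂ × ℂ → ℂ`. -/
noncomputable def wd1 (f : ℂ × ℂ → ℂ) (p : ℂ × ℂ) : ℂ :=
  (fderiv ℝ f p (1, 0) - Complex.I * fderiv ℝ f p (Complex.I, 0)) / 2

/-- Wirtinger derivative in the second variable. -/
noncomputable def wd2 (f : ℂ × ℂ → ℂ) (p : ℂ × ℂ) : ℂ :=
  (fderiv ℝ f p (0, 1) - Complex.I * fderiv ℝ f p (0, Complex.I)) / 2

/-- Conjugate Wirtinger derivative in the first variable. -/
noncomputable def wdbar1 (f : ℂ × ℂ → ℂ) (p : ℂ × ℂ) : ℂ :=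
  (fderiv ℝ f p (1, 0) + Complex.I * fderiv ℝ f p (Complex.I, 0)) / 2

/-- Conjugate Wirtinger derivative in the second variable. -/
noncomputable def wdbar2 (f : ℂ × ℂ → ℂ) (p : ℂ × ℂ) : ℂ :=
  (fderiv ℝ f p (0, 1) + Complex.I * fderiv ℝ f p (0, Complex.I)) / 2

/-- Directional derivative vanishes if the function is locally invariant along a line. -/
lemma dirzero (f : ℂ × ℂ → ℂ) (p w : ℂ × ℂ) (hf : DifferentiableAt ℝ f p)
    (h : ∀ᶠ t : ℝ in nhds (0 : ℝ), f (p + t • w) = f p) : fderiv ℝ f p w = 0 := by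
  have hL : HasDerivAt (fun t : ℝ => p + t • w) w 0 := by
    have h1 : HasDerivAt (fun t : ℝ => t • w) ((1 : ℝ) • w) 0 :=
      (hasDerivAt_id (0 : ℝ)).smul_const w
    simpa using h1.const_add p
  have hcomp : HasDerivAt (fun t : ℝ => f (p + t • w)) (fderiv ℝ f p w) 0 := by
    have hfp : HasFDerivAt f (fderiv ℝ f p) ((fun t : ℝ => p + t • w) 0) := by
      simpa using hf.hasFDerivAt
    exact HasFDerivAt.comp_hasDerivAt (f := fun t : ℝ => p + t • w) (x := (0:ℝ)) (hl := hfp) (hf := hL)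
  have hconst : HasDerivAt (fun t : ℝ => f (p + t • w)) 0 0 :=
    (hasDerivAt_const (0 : ℝ) (f p)).congr_of_eventuallyEq h
  exact hcomp.unique hconst

/-- fderiv of conjugate. -/
lemma fderiv_conj (g : ℂ × ℂ → ℂ) (p : ℂ × ℂ) (hg : DifferentiableAt ℝ g p) (v : ℂ × ℂ) :
    fderiv ℝ (fun q => starRingEnd ℂ (g q)) p v = starRingEnd ℂ (fderiv ℝ g p v) := by
  have h : HasFDerivAt (fun q => starRingEnd ℂ (g q))
      ((Complex.conjCLE : ℂ →L[ℝ] ℂ).comp (fderiv ℝ g p)) p := by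
    have := (Complex.conjCLE.hasFDerivAt (x := g p)).comp p hg.hasFDerivAt
    exact this
  rw [h.fderiv]
  simp [Complex.conjCLE_apply]

theorem stmt_13 (Ω : Set (ℂ × ℂ)) (hΩo : IsOpen Ω) (hΩc : IsConnected Ω)
    (b₁ b₂ : ℂ × ℂ → ℂ)
    (hd₁ : DifferentiableOn ℝ b₁ Ω) (hd₂ : DifferentiableOn ℝ b₂ Ω)
    -- translation invariance for small translations
    (htrans : ∀ p ∈ Ω, ∃ ε > (0 : ℝ), ∀ v : ℂ, ‖v‖ < ε →
      (p.1 + v, p.2 + v) ∈ Ω ∧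
      b₁ (p.1 + v, p.2 + v) = b₁ p ∧ b₂ (p.1 + v, p.2 + v) = b₂ p)
    -- symmetry relations: ∂_{z_j}(b₁+b₂) = ∂̄_{z₁} b̄_j + ∂̄_{z₂} b̄_j
    (hsym1 : ∀ p ∈ Ω,
      wd1 (fun q => b₁ q + b₂ q) p
        = wdbar1 (fun q => starRingEnd ℂ (b₁ q)) p
          + wdbar2 (fun q => starRingEnd ℂ (b₁ q)) p)
    (hsym2 : ∀ p ∈ Ω,
      wd2 (fun q => b₁ q + b₂ q) p
        = wdbar1 (fun q => starRingEnd ℂ (b₂ q)) p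
          + wdbar2 (fun q => starRingEnd ℂ (b₂ q)) p)
    -- analogous conjugate relations: ∂̄_{z_j}(b₁+b₂) = ∂_{z₁} b̄_j + ∂_{z₂} b̄_j
    (hsym1' : ∀ p ∈ Ω,
      wdbar1 (fun q => b₁ q + b₂ q) p
        = wd1 (fun q => starRingEnd ℂ (b₁ q)) p
          + wd2 (fun q => starRingEnd ℂ (b₁ q)) p)
    (hsym2' : ∀ p ∈ Ω,
      wdbar2 (fun q => b₁ q + b₂ q) p
        = wd1 (fun q => starRingEnd ℂ (b₂ q)) p
          + wd2 (fun q => starRingEnd ℂ (b₂ q)) p) :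
    ∀ p ∈ Ω, ∀ q ∈ Ω, b₁ p + b₂ p = b₁ q + b₂ q := by
  set f : ℂ × ℂ → ℂ := fun q => b₁ q + b₂ q with hf_def
  -- Step 1: fderiv of f vanishes on Ω
  have hD : ∀ p ∈ Ω, ∀ w : ℂ × ℂ, fderiv ℝ f p w = 0 := by
    intro p hp
    have hf1 : DifferentiableAt ℝ b₁ p := (hd₁ p hp).differentiableAt (hΩo.mem_nhds hp)
    have hf2 : DifferentiableAt ℝ b₂ p := (hd₂ p hp).differentiableAt (hΩo.mem_nhds hp)
    obtain ⟨ε, hε, hmem⟩ := htrans p hp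
    have hev : ∀ v : ℂ, ∀ᶠ t : ℝ in nhds (0 : ℝ), ‖t • v‖ < ε := by
      intro v
      have hpos : 0 < ε / (‖v‖ + 1) := by positivity
      filter_upwards [eventually_abs_sub_lt (0 : ℝ) hpos] with t ht
      have habs : ‖(t : ℝ) • v‖ = |t| * ‖v‖ := by
        rw [norm_smul, Real.norm_eq_abs]
      rw [habs]
      have h0 : |t| < ε / (‖v‖ + 1) := by simpa using ht
      have h1 : 0 ≤ ‖v‖ := norm_nonneg v
      have h2 : |t| * (‖v‖ + 1) < ε := by
        rw [lt_div_iff₀ (by positivity)] at h0; linarith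
      nlinarith [abs_nonneg t]
    have hb1 : ∀ v : ℂ, fderiv ℝ b₁ p ((v, v) : ℂ × ℂ) = 0 := by
      intro v
      apply dirzero _ _ _ hf1
      filter_upwards [hev v] with t ht
      have heq : p + t • ((v, v) : ℂ × ℂ) = (p.1 + t • v, p.2 + t • v) := rfl
      rw [heq]; exact (hmem _ ht).2.1
    have hb2 : ∀ v : ℂ, fderiv ℝ b₂ p ((v, v) : ℂ × ℂ) = 0 := by
      intro v
      apply dirzero _ _ _ hf2
      filter_upwards [hev v] with t ht
      have heq : p + t • ((v, v) : ℂ × ℂ) = (p.1 + t • v, p.2 + t • v) := rfl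
      rw [heq]; exact (hmem _ ht).2.2
    -- component equations
    have c11 : fderiv ℝ b₁ p (1, 0) + fderiv ℝ b₁ p (0, 1) = 0 := by
      have := hb1 1
      rw [show ((1 : ℂ), (1 : ℂ)) = ((1 : ℂ), (0 : ℂ)) + ((0 : ℂ), (1 : ℂ)) by simp,
        map_add] at this
      exact this
    have c12 : fderiv ℝ b₁ p (Complex.I, 0) + fderiv ℝ b₁ p (0, Complex.I) = 0 := by
      have := hb1 Complex.I
      rw [show ((Complex.I), (Complex.I)) = ((Complex.I), (0 : ℂ)) + ((0 : ℂ), (Complex.I)) by simp,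
        map_add] at this
      exact this
    have c21 : fderiv ℝ b₂ p (1, 0) + fderiv ℝ b₂ p (0, 1) = 0 := by
      have := hb2 1
      rw [show ((1 : ℂ), (1 : ℂ)) = ((1 : ℂ), (0 : ℂ)) + ((0 : ℂ), (1 : ℂ)) by simp,
        map_add] at this
      exact this
    have c22 : fderiv ℝ b₂ p (Complex.I, 0) + fderiv ℝ b₂ p (0, Complex.I) = 0 := by
      have := hb2 Complex.I
      rw [show ((Complex.I), (Complex.I)) = ((Complex.I), (0 : ℂ)) + ((0 : ℂ), (Complex.I)) by simp,
        map_add] at this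
      exact this
    -- fderiv of the sum
    have hadd : ∀ w : ℂ × ℂ, fderiv ℝ f p w = fderiv ℝ b₁ p w + fderiv ℝ b₂ p w := by
      intro w
      rw [hf_def, fderiv_fun_add hf1 hf2, ContinuousLinearMap.add_apply]
    -- rewrite the symmetry hypotheses
    have s1 := hsym1 p hp
    have s2 := hsym2 p hp
    have s1' := hsym1' p hp
    have s2' := hsym2' p hp
    simp only [wd1, wd2, wdbar1, wdbar2] at s1 s2 s1' s2'
    rw [fderiv_conj b₁ p hf1, fderiv_conj b₁ p hf1, fderiv_conj b₁ p hf1, fderiv_conj b₁ p hf1]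
      at s1 s1'
    rw [fderiv_conj b₂ p hf2, fderiv_conj b₂ p hf2, fderiv_conj b₂ p hf2, fderiv_conj b₂ p hf2]
      at s2 s2'
    rw [hadd, hadd] at s1 s2 s1' s2'
    set x1 := fderiv ℝ b₁ p (1, 0)
    set x2 := fderiv ℝ b₁ p (Complex.I, 0)
    set x3 := fderiv ℝ b₁ p (0, 1)
    set x4 := fderiv ℝ b₁ p (0, Complex.I)
    set y1 := fderiv ℝ b₂ p (1, 0)
    set y2 := fderiv ℝ b₂ p (Complex.I, 0)
    set y3 := fderiv ℝ b₂ p (0, 1)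
    set y4 := fderiv ℝ b₂ p (0, Complex.I)
    have hc1 : (starRingEnd ℂ) x1 + (starRingEnd ℂ) x3 = 0 := by
      rw [← map_add, c11, map_zero]
    have hc2 : (starRingEnd ℂ) x2 + (starRingEnd ℂ) x4 = 0 := by
      rw [← map_add, c12, map_zero]
    have hc3 : (starRingEnd ℂ) y1 + (starRingEnd ℂ) y3 = 0 := by
      rw [← map_add, c21, map_zero]
    have hc4 : (starRingEnd ℂ) y2 + (starRingEnd ℂ) y4 = 0 := by
      rw [← map_add, c22, map_zero]
    have hA1 : x1 + y1 = 0 := by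
      have hI := Complex.I_ne_zero
      have e1 : (x1 + y1) - Complex.I * (x2 + y2) = 0 := by
        linear_combination 2 * s1 + hc1 + Complex.I * hc2
      have e2 : (x1 + y1) + Complex.I * (x2 + y2) = 0 := by
        linear_combination 2 * s1' + hc1 - Complex.I * hc2
      linear_combination (e1 + e2) / 2
    have hA2 : x2 + y2 = 0 := by
      have e1 : (x1 + y1) - Complex.I * (x2 + y2) = 0 := by
        linear_combination 2 * s1 + hc1 + Complex.I * hc2
      have e2 : (x1 + y1) + Complex.I * (x2 + y2) = 0 := by
        linear_combination 2 * s1' + hc1 - Complex.I * hc2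
      have : Complex.I * (x2 + y2) = 0 := by linear_combination (e2 - e1) / 2
      have hI : (Complex.I : ℂ) ≠ 0 := Complex.I_ne_zero
      exact (mul_eq_zero.mp this).resolve_left hI
    have hA3 : x3 + y3 = 0 := by
      have e1 : (x3 + y3) - Complex.I * (x4 + y4) = 0 := by
        linear_combination 2 * s2 + hc3 + Complex.I * hc4
      have e2 : (x3 + y3) + Complex.I * (x4 + y4) = 0 := by
        linear_combination 2 * s2' + hc3 - Complex.I * hc4
      linear_combination (e1 + e2) / 2
    have hA4 : x4 + y4 = 0 := by
      have e1 : (x3 + y3) - Complex.I * (x4 + y4) = 0 := by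
        linear_combination 2 * s2 + hc3 + Complex.I * hc4
      have e2 : (x3 + y3) + Complex.I * (x4 + y4) = 0 := by
        linear_combination 2 * s2' + hc3 - Complex.I * hc4
      have : Complex.I * (x4 + y4) = 0 := by linear_combination (e2 - e1) / 2
      exact (mul_eq_zero.mp this).resolve_left Complex.I_ne_zero
    intro w
    have hw : w = w.1.re • ((1 : ℂ), (0 : ℂ)) + w.1.im • ((Complex.I), (0 : ℂ))
        + w.2.re • ((0 : ℂ), (1 : ℂ)) + w.2.im • ((0 : ℂ), (Complex.I)) := by
      ext <;> simp [Complex.real_smul]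
    rw [hw]
    simp only [map_add, map_smul, hadd]
    simp only [Complex.real_smul]
    linear_combination (w.1.re : ℂ) * hA1 + (w.1.im : ℂ) * hA2
      + (w.2.re : ℂ) * hA3 + (w.2.im : ℂ) * hA4
  -- Step 2: local constancy
  have hfd : DifferentiableOn ℝ f Ω := hd₁.add hd₂
  have hloc : ∀ p ∈ Ω, ∀ᶠ q in nhds p, f q = f p := by
    intro p hp
    obtain ⟨r, hr, hball⟩ := Metric.isOpen_iff.mp hΩo p hp
    have hconv : Convex ℝ (Metric.ball p r) := convex_ball p r
    have hfd' : DifferentiableOn ℝ f (Metric.ball p r) := hfd.mono hball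
    have hzero : ∀ x ∈ Metric.ball p r, fderivWithin ℝ f (Metric.ball p r) x = 0 := by
      intro x hx
      rw [fderivWithin_of_isOpen Metric.isOpen_ball hx]
      exact ContinuousLinearMap.ext fun w => by simp [hD x (hball hx) w]
    filter_upwards [Metric.ball_mem_nhds p hr] with q hq
    exact hconv.is_const_of_fderivWithin_eq_zero hfd' hzero hq (Metric.mem_ball_self hr)
  -- Step 3: connectedness
  intro p hp q hq
  by_contra hne
  have hS : IsOpen {x | x ∈ Ω ∧ f x = f p} := by
    rw [isOpen_iff_mem_nhds]
    rintro x ⟨hx, hfx⟩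
    filter_upwards [hloc x hx, hΩo.mem_nhds hx] with y hy1 hy2
    exact ⟨hy2, hy1.trans hfx⟩
  have hT : IsOpen {x | x ∈ Ω ∧ f x ≠ f p} := by
    rw [isOpen_iff_mem_nhds]
    rintro x ⟨hx, hfx⟩
    filter_upwards [hloc x hx, hΩo.mem_nhds hx] with y hy1 hy2
    exact ⟨hy2, hy1.symm ▸ hfx⟩
  have hcover : Ω ⊆ {x | x ∈ Ω ∧ f x = f p} ∪ {x | x ∈ Ω ∧ f x ≠ f p} := by
    intro x hx
    by_cases h : f x = f p
    · exact Or.inl ⟨hx, h⟩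
    · exact Or.inr ⟨hx, h⟩
  obtain ⟨x, _, ⟨_, hx1⟩, ⟨_, hx2⟩⟩ := hΩc.isPreconnected _ _ hS hT hcover
    ⟨p, hp, hp, rfl⟩ ⟨q, hq, hq, fun h => hne h.symm⟩
  exact hx2 hx1
end
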